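/- An order H in a definite rational quaternion division algebra A is a left principal ideal domain if and only if for every ρ ∈ A \ H there exist α, β ∈ H with 0 < N(αρ − β) < 1. (Dedekind–Hasse criterion for quaternion orders.) -/

import Mathlib

open Quaternion

/-- Reduced norm on the definite quaternion algebra `(−a,−b / ℚ)`. -/
def qN (a b : ℚ) (x : ℍ[ℚ, -a, -b]) : ℚ := (x * star x).re

/-- `H` is an order: finitely generated as an additive group, and a full lattice. -/
def IsOrder (a b : ℚ) (H : Subring ℍ[ℚ, -a, -b]) : Prop :=
  H.toAddSubgroup.FG ∧
    ∀ x : ℍ[ℚ, -a, -b], ∃ n : ℕ, 0 < n ∧ (n : ℍ[ℚ, -a, -b]) * x ∈ H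

/-- `H` is a left principal ideal domain: every left ideal is principal. -/
def IsLeftPID (a b : ℚ) (H : Subring ℍ[ℚ, -a, -b]) : Prop :=
  ∀ I : Set ℍ[ℚ, -a, -b],
    (I ⊆ H ∧ (0 : ℍ[ℚ, -a, -b]) ∈ I ∧ (∀ x ∈ I, ∀ y ∈ I, x + y ∈ I) ∧
      (∀ h ∈ H, ∀ x ∈ I, h * x ∈ I)) →
    ∃ γ ∈ H, I = {x | ∃ h ∈ H, x = h * γ}

namespace DHaux

open QuaternionAlgebra Polynomial

variable {a b : ℚ}

theorem qN_eq (a b : ℚ) (x : ℍ[ℚ, -a, -b]) :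
    qN a b x = x.re^2 + a * x.imI^2 + b * x.imJ^2 + a*b*x.imK^2 := by
  simp [qN, QuaternionAlgebra.re_mul]; ring

theorem mul_star_self (a b : ℚ) (x : ℍ[ℚ,-a,-b]) :
    x * star x = ((qN a b x : ℚ) : ℍ[ℚ,-a,-b]) := by
  rw [qN]; exact mul_star_eq_coe x

theorem star_mul_self' (a b : ℚ) (x : ℍ[ℚ,-a,-b]) :
    star x * x = ((qN a b x : ℚ) : ℍ[ℚ,-a,-b]) := by
  rw [star_comm_self']; exact mul_star_self a b x

theorem quadratic_rel (a b : ℚ) (x : ℍ[ℚ,-a,-b]) :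
    x*x - ((2*x.re : ℚ) : ℍ[ℚ,-a,-b])*x + ((qN a b x : ℚ) : ℍ[ℚ,-a,-b]) = 0 := by
  rw [show ((2*x.re : ℚ) : ℍ[ℚ,-a,-b]) = x + star x by
    rw [QuaternionAlgebra.self_add_star']; simp, ← star_mul_self' a b x]
  noncomm_ring

theorem qN_mul (a b : ℚ) (x y : ℍ[ℚ, -a, -b]) : qN a b (x*y) = qN a b x * qN a b y := by
  simp only [qN_eq, QuaternionAlgebra.re_mul, QuaternionAlgebra.imI_mul,
    QuaternionAlgebra.imJ_mul, QuaternionAlgebra.imK_mul]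
  ring

theorem qN_eq_zero (ha : 0 < a) (hb : 0 < b) (x : ℍ[ℚ, -a, -b]) : qN a b x = 0 ↔ x = 0 := by
  rw [qN_eq]
  constructor
  · intro h
    have h1 : x.re^2 = 0 ∧ a * x.imI^2 = 0 ∧ b * x.imJ^2 = 0 ∧ a*b*x.imK^2 = 0 := by
      refine ⟨?_, ?_, ?_, ?_⟩ <;>
        nlinarith [sq_nonneg x.re, sq_nonneg x.imI, sq_nonneg x.imJ, sq_nonneg x.imK,
          mul_nonneg ha.le (sq_nonneg x.imI), mul_nonneg hb.le (sq_nonneg x.imJ),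
          mul_nonneg (mul_nonneg ha.le hb.le) (sq_nonneg x.imK)]
    obtain ⟨h1, h2, h3, h4⟩ := h1
    ext
    · exact pow_eq_zero_iff (n := 2) (by norm_num) |>.mp h1
    · exact pow_eq_zero_iff (n := 2) (by norm_num) |>.mp ((mul_eq_zero.mp h2).resolve_left ha.ne')
    · exact pow_eq_zero_iff (n := 2) (by norm_num) |>.mp ((mul_eq_zero.mp h3).resolve_left hb.ne')
    · exact pow_eq_zero_iff (n := 2) (by norm_num) |>.mp
        ((mul_eq_zero.mp h4).resolve_left (by positivity))
  · rintro rfl; simp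

theorem qN_nonneg (ha : 0 < a) (hb : 0 < b) (x : ℍ[ℚ, -a, -b]) : 0 ≤ qN a b x := by
  rw [qN_eq]; positivity

theorem qN_pos (ha : 0 < a) (hb : 0 < b) {x : ℍ[ℚ, -a, -b]} (hx : x ≠ 0) : 0 < qN a b x :=
  lt_of_le_of_ne (qN_nonneg ha hb x) (fun h => hx ((qN_eq_zero ha hb x).mp h.symm))

theorem qN_noZero (ha : 0 < a) (hb : 0 < b) : NoZeroDivisors ℍ[ℚ,-a,-b] := by
  constructor
  intro x y hxy
  by_contra hcon
  push_neg at hcon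
  have : qN a b (x*y) = 0 := by rw [hxy, qN_eq]; simp
  rw [qN_mul] at this
  rcases mul_eq_zero.mp this with h | h
  · exact hcon.1 ((qN_eq_zero ha hb x).mp h)
  · exact hcon.2 ((qN_eq_zero ha hb y).mp h)

theorem qN_coe (a b c : ℚ) : qN a b ((c : ℚ) : ℍ[ℚ,-a,-b]) = c^2 := by
  simp [qN_eq]

theorem order_integral (H : Subring ℍ[ℚ, -a, -b]) (hH : IsOrder a b H)
    {x : ℍ[ℚ, -a, -b]} (hx : x ∈ H) : IsIntegral ℤ x := by
  refine IsIntegral.of_mem_of_fg (subalgebraOfSubring H) ?_ x hx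
  rw [Submodule.fg_iff_addSubgroup_fg]
  exact hH.1

theorem key_int (ha : 0 < a) (hb : 0 < b) {x : ℍ[ℚ,-a,-b]} (hx : IsIntegral ℤ x) :
    (∃ t : ℤ, (2 * x.re : ℚ) = t) ∧ (∃ n : ℤ, qN a b x = n) := by
  haveI : NoZeroDivisors ℍ[ℚ,-a,-b] := qN_noZero ha hb
  haveI : IsDomain ℍ[ℚ,-a,-b] := NoZeroDivisors.to_isDomain _
  by_cases him : x ∈ (algebraMap ℚ ℍ[ℚ,-a,-b]).range
  · obtain ⟨c, rfl⟩ := him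
    have hc : IsIntegral ℤ c := by
      rwa [← isIntegral_algHom_iff (IsScalarTower.toAlgHom ℤ ℚ ℍ[ℚ,-a,-b])
        (QuaternionAlgebra.algebraMap_injective)]
    obtain ⟨y, hy⟩ := IsIntegrallyClosed.isIntegral_iff.mp hc
    have hcy : c = (y : ℚ) := hy.symm
    have hre : ((algebraMap ℚ ℍ[ℚ,-a,-b]) c).re = c := rfl
    constructor
    · exact ⟨2*y, by rw [hre, hcy]; push_cast; ring⟩
    · refine ⟨y*y, ?_⟩
      have : (algebraMap ℚ ℍ[ℚ,-a,-b]) c = (c : ℍ[ℚ,-a,-b]) := rfl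
      rw [this, qN_eq]
      simp [hcy]
      push_cast; ring
  · set t := (2 * x.re : ℚ) with ht
    set n := qN a b x with hn
    set p : ℚ[X] := X^2 - C t * X + C n with hp
    have hroot : aeval x p = 0 := by
      simp only [hp, map_add, map_sub, map_mul, map_pow, aeval_X, aeval_C]
      have e1 : (algebraMap ℚ ℍ[ℚ,-a,-b]) t = ((t:ℚ) : ℍ[ℚ,-a,-b]) := rfl
      have e2 : (algebraMap ℚ ℍ[ℚ,-a,-b]) n = ((n:ℚ) : ℍ[ℚ,-a,-b]) := rfl
      rw [e1, e2, sq]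
      exact quadratic_rel a b x
    have hxQ : IsIntegral ℚ x := hx.tower_top
    have hmonic : p.Monic := by
      have : p = X^2 + (C (-t) * X + C n) := by rw [hp, C_neg]; ring
      rw [this]
      apply monic_X_pow_add
      refine lt_of_le_of_lt (degree_linear_le) ?_
      norm_num
    have hdvd : minpoly ℚ x ∣ p := minpoly.dvd ℚ x hroot
    have hdeg2 : 2 ≤ (minpoly ℚ x).natDegree := (minpoly.two_le_natDegree_iff hxQ).mpr him
    have hpdeg : p.natDegree = 2 := by
      have : p = C 1 * X^2 + C (-t) * X + C n := by rw [hp, C_neg]; simp; ring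
      rw [this]
      exact natDegree_quadratic one_ne_zero
    have heq : minpoly ℚ x = p := by
      apply eq_of_dvd_of_natDegree_le_of_leadingCoeff hdvd (by omega)
      rw [(minpoly.monic hxQ).leadingCoeff, hmonic.leadingCoeff]
    obtain ⟨q, hqmonic, hq0⟩ := hx
    have hpq : p ∣ q.map (algebraMap ℤ ℚ) := by
      rw [← heq]
      apply minpoly.dvd
      rw [aeval_map_algebraMap]
      exact hq0
    obtain ⟨g, hg⟩ := IsIntegrallyClosed.eq_map_mul_C_of_dvd (K := ℚ) hqmonic hpq
    rw [hmonic.leadingCoeff, map_one, mul_one] at hg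
    constructor
    · refine ⟨-(g.coeff 1), ?_⟩
      have h1 : p.coeff 1 = -t := by simp [hp, coeff_one]
      have h2 : p.coeff 1 = ((g.coeff 1 : ℤ) : ℚ) := by rw [← hg, coeff_map]; rfl
      push_cast
      rw [← h2, h1]; ring
    · refine ⟨g.coeff 0, ?_⟩
      have h1 : p.coeff 0 = n := by simp [hp]
      have h2 : p.coeff 0 = ((g.coeff 0 : ℤ) : ℚ) := by rw [← hg, coeff_map]; rfl
      rw [← h2, h1]

/-- the norm of an element of an order is a (nonnegative) integer -/
theorem qN_int (ha : 0 < a) (hb : 0 < b) (H : Subring ℍ[ℚ, -a, -b]) (hH : IsOrder a b H)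
    {x : ℍ[ℚ, -a, -b]} (hx : x ∈ H) : ∃ n : ℤ, qN a b x = n :=
  (key_int ha hb (order_integral H hH hx)).2

/-- orders are stable under conjugation -/
theorem star_mem (ha : 0 < a) (hb : 0 < b) (H : Subring ℍ[ℚ, -a, -b]) (hH : IsOrder a b H)
    {x : ℍ[ℚ, -a, -b]} (hx : x ∈ H) : star x ∈ H := by
  obtain ⟨t, htt⟩ := (key_int ha hb (order_integral H hH hx)).1
  have : star x = ((2 * x.re : ℚ) : ℍ[ℚ,-a,-b]) - x := by
    rw [QuaternionAlgebra.star_eq_two_re_sub]; simp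
  rw [this, htt]
  have : (((t : ℚ)) : ℍ[ℚ,-a,-b]) = ((t : ℤ) : ℍ[ℚ,-a,-b]) := by
    ext <;> simp
  rw [this]
  exact sub_mem (intCast_mem H t) hx

theorem inv_mul_cancel_aux (ha : 0 < a) (hb : 0 < b) {γ : ℍ[ℚ,-a,-b]} (hγ : γ ≠ 0)
    (x : ℍ[ℚ,-a,-b]) : (x * ((qN a b γ)⁻¹ • star γ)) * γ = x := by
  have hc : qN a b γ ≠ 0 := (qN_pos ha hb hγ).ne'
  rw [mul_assoc, smul_mul_assoc, star_mul_self' a b γ, mul_smul_comm]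
  have : x * ((qN a b γ : ℚ) : ℍ[ℚ,-a,-b]) = qN a b γ • x := by
    rw [← coe_mul_eq_smul]
    exact (QuaternionAlgebra.coe_commute _ _).symm.eq
  rw [this, smul_smul, inv_mul_cancel₀ hc, one_smul]

theorem natCast_coe (a b : ℚ) (n : ℕ) :
    ((n : ℕ) : ℍ[ℚ,-a,-b]) = (((n : ℚ)) : ℍ[ℚ,-a,-b]) := by
  ext <;> simp

end DHaux

open DHaux

theorem stmt_2 (a b : ℚ) (ha : 0 < a) (hb : 0 < b)
    (H : Subring ℍ[ℚ, -a, -b]) (hH : IsOrder a b H) :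
    IsLeftPID a b H ↔
      ∀ ρ : ℍ[ℚ, -a, -b], ρ ∉ H →
        ∃ α ∈ H, ∃ β ∈ H, 0 < qN a b (α * ρ - β) ∧ qN a b (α * ρ - β) < 1 := by
  haveI : NoZeroDivisors ℍ[ℚ,-a,-b] := qN_noZero ha hb
  constructor
  · -- PID → Dedekind–Hasse
    intro hpid ρ hρ
    obtain ⟨n, hn, hnρ⟩ := hH.2 ρ
    set N : ℍ[ℚ,-a,-b] := ((n : ℕ) : ℍ[ℚ,-a,-b]) with hN
    have hNH : N ∈ H := natCast_mem H n
    have hNcoe : N = (((n : ℚ)) : ℍ[ℚ,-a,-b]) := natCast_coe a b n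
    have hqNN : qN a b N = (n : ℚ)^2 := by rw [hNcoe, qN_coe]
    have hNne : N ≠ 0 := by
      intro h
      have : qN a b N = 0 := by rw [h, qN_eq]; simp
      rw [hqNN] at this
      have : (n : ℚ) = 0 := by nlinarith
      exact_mod_cast absurd this (by exact_mod_cast hn.ne')
    set I : Set ℍ[ℚ,-a,-b] := {x | ∃ h₁ ∈ H, ∃ h₂ ∈ H, x = h₁ * (N*ρ) + h₂ * N} with hIdef
    have hIprops : I ⊆ H ∧ (0 : ℍ[ℚ,-a,-b]) ∈ I ∧ (∀ x ∈ I, ∀ y ∈ I, x + y ∈ I) ∧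
        (∀ h ∈ H, ∀ x ∈ I, h * x ∈ I) := by
      refine ⟨?_, ?_, ?_, ?_⟩
      · rintro x ⟨h₁, hh₁, h₂, hh₂, rfl⟩
        exact add_mem (mul_mem hh₁ hnρ) (mul_mem hh₂ hNH)
      · exact ⟨0, zero_mem H, 0, zero_mem H, by simp⟩
      · rintro x ⟨h₁, hh₁, h₂, hh₂, rfl⟩ y ⟨k₁, hk₁, k₂, hk₂, rfl⟩
        exact ⟨h₁ + k₁, add_mem hh₁ hk₁, h₂ + k₂, add_mem hh₂ hk₂, by noncomm_ring⟩
      · rintro h hh x ⟨h₁, hh₁, h₂, hh₂, rfl⟩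
        exact ⟨h * h₁, mul_mem hh hh₁, h * h₂, mul_mem hh hh₂, by noncomm_ring⟩
    obtain ⟨γ, hγH, hIγ⟩ := hpid I hIprops
    have hNI : N ∈ I := ⟨0, zero_mem H, 1, one_mem H, by simp⟩
    have hNρI : N * ρ ∈ I := ⟨1, one_mem H, 0, zero_mem H, by simp⟩
    rw [hIγ] at hNI hNρI
    obtain ⟨h, hh, hhγ⟩ := hNI
    obtain ⟨k, hk, hkγ⟩ := hNρI
    have hγI : γ ∈ I := by rw [hIγ]; exact ⟨1, one_mem H, (one_mul γ).symm⟩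
    obtain ⟨α, hα, β', hβ', hγeq⟩ := hγI
    have hγne : γ ≠ 0 := by
      intro h0; rw [h0, mul_zero] at hhγ; exact hNne hhγ
    have hhne : h ≠ 0 := by
      intro h0; rw [h0, zero_mul] at hhγ; exact hNne hhγ
    have hqγ : 0 < qN a b γ := qN_pos ha hb hγne
    have hqmul : qN a b N = qN a b h * qN a b γ := by rw [hhγ, qN_mul]
    obtain ⟨mh, hmh⟩ := qN_int ha hb H hH hh
    have hmh1 : 1 ≤ mh := by
      have := qN_pos ha hb hhne
      rw [hmh] at this
      exact_mod_cast this
    have hNcomm : ∀ z : ℍ[ℚ,-a,-b], N * z = z * N := fun z => (Nat.cast_commute n z).eq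
    rcases eq_or_lt_of_le hmh1 with hone | htwo
    · -- norm of h is 1 : then ρ ∈ H, contradiction
      exfalso
      have hq1 : qN a b h = 1 := by rw [hmh, ← hone]; norm_num
      have hγN : γ = star h * N := by
        rw [hhγ, ← mul_assoc, star_mul_self' a b h, hq1]
        simp
      have : N * ρ = N * (k * star h) := by
        rw [hkγ, hγN, ← mul_assoc, hNcomm (k * star h)]
      have hρeq : ρ = k * star h := mul_left_cancel₀ hNne this
      exact hρ (hρeq ▸ mul_mem hk (star_mem ha hb H hH hh))
    · -- norm of h is ≥ 2 : γ/N gives the required approximation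
      refine ⟨α, hα, -β', neg_mem hβ', ?_⟩
      have hsub : α * ρ - -β' = α * ρ + β' := sub_neg_eq_add _ _
      have hkey : N * (α * ρ + β') = γ := by
        rw [hγeq, mul_add, ← mul_assoc, hNcomm α, mul_assoc, hNcomm β']
      have hq : (n:ℚ)^2 * qN a b (α * ρ + β') = qN a b γ := by
        rw [← hqNN, ← qN_mul, hkey]
      have hγlt : qN a b γ < (n:ℚ)^2 := by
        have h2 : (2:ℚ) ≤ qN a b h := by rw [hmh]; exact_mod_cast htwo
        nlinarith
      have hn2 : (0:ℚ) < (n:ℚ)^2 := by positivity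
      rw [hsub]
      constructor
      · nlinarith
      · nlinarith
  · -- Dedekind–Hasse → PID
    intro hDH I ⟨hIH, hI0, hIadd, hImul⟩
    by_cases hz : ∀ x ∈ I, x = 0
    · refine ⟨0, zero_mem H, ?_⟩
      ext x
      constructor
      · intro hx
        exact ⟨0, zero_mem H, by rw [hz x hx, mul_zero]⟩
      · rintro ⟨h, hh, rfl⟩
        rw [mul_zero]; exact hI0
    · push_neg at hz
      obtain ⟨x₀, hx₀I, hx₀⟩ := hz
      set S : Set ℕ := {m : ℕ | ∃ x ∈ I, x ≠ 0 ∧ qN a b x = (m : ℚ)} with hS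
      have hSne : S.Nonempty := by
        obtain ⟨m, hm⟩ := qN_int ha hb H hH (hIH hx₀I)
        refine ⟨m.toNat, x₀, hx₀I, hx₀, ?_⟩
        have : 0 < qN a b x₀ := qN_pos ha hb hx₀
        rw [hm] at this ⊢
        have hm0 : 0 ≤ m := by exact_mod_cast this.le
        exact_mod_cast (Int.toNat_of_nonneg hm0).symm
      obtain ⟨γ, hγI, hγne, hγmin⟩ := Nat.sInf_mem hSne
      refine ⟨γ, hIH hγI, ?_⟩
      ext x
      constructor
      · intro hxI
        set ρ := x * ((qN a b γ)⁻¹ • star γ) with hρdef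
        have hργ : ρ * γ = x := inv_mul_cancel_aux ha hb hγne x
        by_cases hρ : ρ ∈ H
        · exact ⟨ρ, hρ, hργ.symm⟩
        · exfalso
          obtain ⟨α, hα, β, hβ, h1, h2⟩ := hDH ρ hρ
          set y := α * x + (-β) * γ with hy
          have hyI : y ∈ I := hIadd _ (hImul α hα x hxI) _ (hImul (-β) (neg_mem hβ) γ hγI)
          have hyeq : y = (α * ρ - β) * γ := by
            rw [hy, sub_mul, mul_assoc, hργ, neg_mul, sub_eq_add_neg]
          have hqy : qN a b y = qN a b (α * ρ - β) * qN a b γ := by rw [hyeq, qN_mul]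
          have hqγpos : 0 < qN a b γ := qN_pos ha hb hγne
          have hypos : 0 < qN a b y := by rw [hqy]; positivity
          have hyne : y ≠ 0 := fun h0 => by
            rw [h0, qN_eq] at hypos; simp at hypos
          have hylt : qN a b y < qN a b γ := by
            rw [hqy]
            nlinarith
          obtain ⟨m, hm⟩ := qN_int ha hb H hH (hIH hyI)
          have hm0 : 0 ≤ m := by
            have := hypos; rw [hm] at this; exact_mod_cast this.le
          have hmS : m.toNat ∈ S := by
            refine ⟨y, hyI, hyne, ?_⟩
            rw [hm]
            exact_mod_cast (Int.toNat_of_nonneg hm0).symm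
          have hle : sInf S ≤ m.toNat := Nat.sInf_le hmS
          have hcast : ((sInf S : ℕ) : ℚ) ≤ ((m.toNat : ℕ) : ℚ) := by exact_mod_cast hle
          have hmq : ((m.toNat : ℕ) : ℚ) = (m : ℚ) := by
            exact_mod_cast Int.toNat_of_nonneg hm0
          rw [hmq, ← hγmin] at hcast
          rw [hm] at hylt
          linarith
      · rintro ⟨h, hh, rfl⟩
        exact hImul h hh γ hγI
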